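/- The semigroup of convex polyhedra of the form (bounded lattice polytope) + C, where C is a fixed pointed rational polyhedral cone, under Minkowski addition, satisfies the cancellation law: if P + R = Q + R then P = Q. -/

import Mathlib

open scoped Pointwise BigOperators

/-- Rådström cancellation: if `A + K ⊆ B + K` with `K` nonempty bounded and `B`
closed convex, then `A ⊆ B`. -/
lemma radstrom_subset {E : Type*} [NormedAddCommGroup E] [NormedSpace ℝ E]
    (A B K : Set E) (hBconv : Convex ℝ B) (hBcl : IsClosed B)
    (hKne : K.Nonempty) (hKb : Bornology.IsBounded K) (h : A + K ⊆ B + K) : A ⊆ B := by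
  obtain ⟨M, hM⟩ := Bornology.IsBounded.exists_norm_le hKb
  obtain ⟨k₀, hk₀⟩ := hKne
  intro a ha
  -- one step of the iteration
  have step : ∀ kk : K, ∃ p : E × E, p.1 ∈ B ∧ p.2 ∈ K ∧ a + kk.1 = p.1 + p.2 := by
    intro ⟨kk, hkk⟩
    have : a + kk ∈ B + K := h (Set.add_mem_add ha hkk)
    obtain ⟨b, hb, k', hk', e⟩ := this
    exact ⟨(b, k'), hb, hk', e.symm⟩
  choose F hF1 hF2 hF3 using step
  -- the sequences
  let k : ℕ → K := fun m => Nat.rec ⟨k₀, hk₀⟩ (fun _ prev => ⟨(F prev).2, hF2 prev⟩) m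
  let b : ℕ → E := fun m => (F (k m)).1
  have hb : ∀ m, b m ∈ B := fun m => hF1 (k m)
  have hrec : ∀ m, a + (k m).1 = b m + (k (m + 1)).1 := by
    intro m
    show a + (k m).1 = (F (k m)).1 + (F (k m)).2
    exact hF3 (k m)
  -- telescoping
  have htel : ∀ m : ℕ, m • a + (k 0).1 = (∑ i ∈ Finset.range m, b i) + (k m).1 := by
    intro m
    induction m with
    | zero => simp
    | succ m ih =>
      rw [Finset.sum_range_succ, succ_nsmul]
      calc m • a + a + (k 0).1 = m • a + (k 0).1 + a := by abel
        _ = (∑ i ∈ Finset.range m, b i) + (k m).1 + a := by rw [ih]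
        _ = (∑ i ∈ Finset.range m, b i) + (a + (k m).1) := by abel
        _ = (∑ i ∈ Finset.range m, b i) + (b m + (k (m + 1)).1) := by rw [hrec]
        _ = _ := by abel
  -- `a` is in the closure of `B`
  have hclos : a ∈ closure B := by
    rw [Metric.mem_closure_iff]
    intro ε hε
    obtain ⟨m, hm⟩ := exists_nat_gt (2 * M / ε)
    have hMnn : (0 : ℝ) ≤ M := le_trans (norm_nonneg k₀) (hM k₀ hk₀)
    have hm1 : (0 : ℝ) < m + 1 := by positivity
    set c : E := ((m + 1 : ℝ))⁻¹ • ∑ i ∈ Finset.range (m + 1), b i with hc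
    have hcB : c ∈ B := by
      have := hBconv.sum_mem (t := Finset.range (m + 1))
        (w := fun _ => ((m + 1 : ℝ))⁻¹) (z := b)
        (fun i _ => by positivity)
        (by
          rw [Finset.sum_const, Finset.card_range, nsmul_eq_mul]
          field_simp
          exact Nat.cast_succ m)
        (fun i _ => hb i)
      rwa [← Finset.smul_sum] at this
    refine ⟨c, hcB, ?_⟩
    have key : a - c = ((m + 1 : ℝ))⁻¹ • ((k (m + 1)).1 - (k 0).1) := by
      have h1 := htel (m + 1)
      have h2 : ∑ i ∈ Finset.range (m + 1), b i = (m + 1) • a + (k 0).1 - (k (m + 1)).1 := by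
        rw [h1]; abel
      rw [hc, h2, smul_sub, smul_add, ← Nat.cast_smul_eq_nsmul ℝ (m + 1) a, smul_smul]
      push_cast
      rw [inv_mul_cancel₀ hm1.ne', one_smul]
      module
    rw [dist_eq_norm, key, norm_smul]
    have hbound : ‖(k (m + 1)).1 - (k 0).1‖ ≤ 2 * M := by
      calc ‖(k (m + 1)).1 - (k 0).1‖ ≤ ‖(k (m + 1)).1‖ + ‖(k 0).1‖ := norm_sub_le _ _
        _ ≤ M + M := add_le_add (hM _ (k (m + 1)).2) (hM _ (k 0).2)
        _ = 2 * M := by ring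
    have : ‖((m + 1 : ℝ))⁻¹‖ * ‖(k (m + 1)).1 - (k 0).1‖ ≤ ((m : ℝ) + 1)⁻¹ * (2 * M) := by
      rw [Real.norm_eq_abs, abs_of_pos (by positivity)]
      exact mul_le_mul_of_nonneg_left hbound (by positivity)
    refine lt_of_le_of_lt this ?_
    rw [inv_mul_lt_iff₀ hm1]
    calc 2 * M = 2 * M / ε * ε := by field_simp
      _ < m * ε := by exact mul_lt_mul_of_pos_right hm hε
      _ ≤ (m + 1) * ε := by nlinarith
  rwa [hBcl.closure_eq] at hclos

/-- `P` is of the form (bounded convex polytope) + `C`. -/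
def IsPolyhedronOver {n : ℕ} (C P : Set (Fin n → ℝ)) : Prop :=
  ∃ B : Set (Fin n → ℝ), B.Finite ∧ B.Nonempty ∧ P = convexHull ℝ B + C

theorem stmt8 (n : ℕ) (C : Set (Fin n → ℝ))
    -- `C` is a pointed rational polyhedral cone:
    (hCpoly : ∃ V : Finset (Fin n → ℤ),
      C = {x | ∀ v ∈ V, 0 ≤ ∑ i, (v i : ℝ) * x i})
    (hCpointed : ∀ x ∈ C, -x ∈ C → x = 0)
    (P Q R : Set (Fin n → ℝ))
    (hP : IsPolyhedronOver C P) (hQ : IsPolyhedronOver C Q) (hR : IsPolyhedronOver C R)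
    (h : P + R = Q + R) :
    P = Q := by
  classical
  obtain ⟨V, hV⟩ := hCpoly
  -- basic properties of `C`
  have hC0 : (0 : Fin n → ℝ) ∈ C := by
    rw [hV]; intro v _; simp
  have hCadd : ∀ x ∈ C, ∀ y ∈ C, x + y ∈ C := by
    intro x hx y hy
    rw [hV] at *
    intro v hv
    have := add_nonneg (hx v hv) (hy v hv)
    simpa [Pi.add_apply, mul_add, Finset.sum_add_distrib] using this
  have hCC : C + C = C := by
    apply Set.Subset.antisymm
    · rintro z ⟨x, hx, y, hy, rfl⟩
      exact hCadd x hx y hy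
    · intro x hx
      exact ⟨x, hx, 0, hC0, by simp⟩
  have hCconv : Convex ℝ C := by
    rw [hV]
    intro x hx y hy s t hs ht hst
    intro v hv
    have h1 : ∑ i, (v i : ℝ) * (s • x + t • y) i
        = s * ∑ i, (v i : ℝ) * x i + t * ∑ i, (v i : ℝ) * y i := by
      simp only [Pi.add_apply, Pi.smul_apply, smul_eq_mul, Finset.mul_sum]
      rw [← Finset.sum_add_distrib]
      congr 1; ext i; ring
    rw [Set.mem_setOf_eq] at hx hy
    rw [h1]
    exact add_nonneg (mul_nonneg hs (hx v hv)) (mul_nonneg ht (hy v hv))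
  have hCcl : IsClosed C := by
    rw [hV]
    have : {x : Fin n → ℝ | ∀ v ∈ V, 0 ≤ ∑ i, (v i : ℝ) * x i}
        = ⋂ v ∈ V, {x : Fin n → ℝ | 0 ≤ ∑ i, (v i : ℝ) * x i} := by
      ext x; simp
    rw [this]
    refine isClosed_biInter fun v _ => ?_
    exact isClosed_le continuous_const
      (continuous_finset_sum _ fun i _ => (continuous_const.mul (continuous_apply i)))
  obtain ⟨BP, hBPfin, hBPne, rfl⟩ := hP
  obtain ⟨BQ, hBQfin, hBQne, rfl⟩ := hQ
  obtain ⟨BR, hBRfin, hBRne, rfl⟩ := hR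
  set K : Set (Fin n → ℝ) := convexHull ℝ BR with hK
  have hKcpt : IsCompact K := hBRfin.isCompact_convexHull ℝ
  have hKne : K.Nonempty := hBRne.mono (subset_convexHull ℝ BR)
  -- rewrite `h` as `(conv BP + C) + K = (conv BQ + C) + K`
  have hrw : ∀ B : Set (Fin n → ℝ), (convexHull ℝ B + C) + (K + C)
      = (convexHull ℝ B + C) + K := by
    intro B
    calc (convexHull ℝ B + C) + (K + C) = (convexHull ℝ B + (C + C)) + K := by
          rw [add_comm K C, ← add_assoc, add_assoc (convexHull ℝ B) C C]
      _ = (convexHull ℝ B + C) + K := by rw [hCC]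
  rw [hrw BP, hrw BQ] at h
  -- both sides are closed convex sets
  have hconv : ∀ B : Set (Fin n → ℝ), Convex ℝ (convexHull ℝ B + C) :=
    fun B => (convex_convexHull ℝ B).add hCconv
  have hcl : ∀ B : Set (Fin n → ℝ), B.Finite → IsClosed (convexHull ℝ B + C) :=
    fun B hB => hCcl.add_left_of_isCompact (hB.isCompact_convexHull ℝ)
  apply Set.Subset.antisymm
  · exact radstrom_subset _ _ K (hconv BQ) (hcl BQ hBQfin) hKne hKcpt.isBounded h.le
  · exact radstrom_subset _ _ K (hconv BP) (hcl BP hBPfin) hKne hKcpt.isBounded h.ge
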